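/- Suppose a word u over an alphabet Γ contains k pairwise disjoint factors v_1, …, v_k such that the combined multiset of factors of length ℓ of the v_i contains at least D distinct words each occurring exactly once. Then the number of distinct factors of length ℓ of u is at least D, and any SLP for u has size at least D/ℓ. -/

import Mathlib

/-- A straight-line program over alphabet `α`: nonterminals `0, ..., n-1`, each with a
single nonempty right-hand side referring only to smaller nonterminals (acyclicity). -/
structure SLP (α : Type) where
  n : ℕ
  rhs : Fin n → List (Fin n ⊕ α)
  start : Fin n
  dec : ∀ i j, Sum.inl j ∈ rhs i → (j : ℕ) < (i : ℕ)
  ne : ∀ i, rhs i ≠ []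

/-- The word derived by nonterminal `i`. -/
def SLP.val {α : Type} (G : SLP α) (i : Fin G.n) : List α :=
  ((G.rhs i).attach.map (fun s =>
    match h : s.1 with
    | Sum.inl j => G.val j
    | Sum.inr a => [a])).flatten
termination_by (i : ℕ)
decreasing_by exact G.dec i _ (h ▸ s.2)

/-- The size of an SLP: total length of all right-hand sides. -/
def SLP.size {α : Type} (G : SLP α) : ℕ := ∑ i, (G.rhs i).length

def SLP.produces {α : Type} (G : SLP α) (w : List α) : Prop := G.val G.start = w

/-- `gsize w` is the size of a smallest SLP producing `w`. -/
noncomputable def gsize {α : Type} (w : List α) : ℕ :=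
  sInf {s | ∃ G : SLP α, G.produces w ∧ G.size = s}

/-- The number of occurrences (starting positions) of `x` as a factor of `w`. -/
def countOcc {σ : Type} [DecidableEq σ] (x w : List σ) : ℕ :=
  ((List.range (w.length + 1)).filter (fun i => (w.drop i).take x.length = x)).length

-- auxiliary
lemma take_drop_infix {Γ : Type} (w : List Γ) (a n : ℕ) : (w.drop a).take n <:+: w :=
  ((w.drop a).take_prefix n).isInfix.trans (w.drop_suffix a).isInfix

lemma infix_occ {Γ : Type} {w x : List Γ} (h : x <:+: w) :
    ∃ a, a + x.length ≤ w.length ∧ x = (w.drop a).take x.length := by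
  obtain ⟨s, t, rfl⟩ := h
  refine ⟨s.length, by simp, ?_⟩
  rw [List.append_assoc, List.drop_left, List.take_left]

lemma flatten_anchor {Γ : Type} : ∀ (L : List (List Γ)) (x : List Γ), x ≠ [] → x <:+: L.flatten →
    (∃ t, ∃ ht : t < L.length, x <:+: (L.get ⟨t, ht⟩).tail) ∨
    (∃ t, t < L.length ∧ ∃ d, d < x.length ∧ ∃ a, a + d = ((L.take t).flatten).length ∧
      x = ((L.flatten).drop a).take x.length) := by
  intro L
  induction L with
  | nil => intro x hx h; simp at h; exact absurd h hx
  | cons b L' IH =>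
    intro x hx h
    have hℓ : 1 ≤ x.length := List.length_pos_iff.mpr hx
    obtain ⟨a, hle, hxeq⟩ := infix_occ h
    rcases Nat.eq_zero_or_pos a with ha0 | ha1
    · subst ha0
      exact Or.inr ⟨0, by simp, 0, hℓ, 0, by simp, hxeq⟩
    by_cases h1 : a + x.length ≤ b.length
    · left
      refine ⟨0, by simp, ?_⟩
      have hxb : x = (b.drop a).take x.length := by
        refine hxeq.trans ?_
        simp only [List.flatten_cons]
        rw [List.drop_append, List.take_append_of_le_length (by simp; omega)]
      have h3 : x <:+: b.drop a := hxb ▸ ((b.drop a).take_prefix x.length).isInfix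
      refine h3.trans ?_
      have h4 : b.drop a = b.tail.drop (a - 1) := by
        rw [← List.drop_one, List.drop_drop]; congr 1; omega
      rw [List.get, h4]
      exact (b.tail.drop_suffix (a-1)).isInfix
    by_cases h2 : a < b.length
    · right
      have hL' : L' ≠ [] := by
        intro hn; subst hn; simp at hle; omega
      refine ⟨1, by simp [List.length_pos_iff.mpr hL'], b.length - a, by omega, a, ?_, hxeq⟩
      simp; omega
    · push_neg at h2
      have hx' : x = (L'.flatten.drop (a - b.length)).take x.length := by
        refine hxeq.trans ?_
        simp only [List.flatten_cons]
        rw [List.drop_append, List.drop_eq_nil_of_le h2, List.nil_append]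
      have hinf : x <:+: L'.flatten := hx' ▸ take_drop_infix _ _ _
      rcases IH x hx hinf with ⟨t, ht, hinf'⟩ | ⟨t, ht, d, hd', a', ha', hxeq'⟩
      · exact Or.inl ⟨t + 1, by simpa using Nat.succ_lt_succ ht, by simpa using hinf'⟩
      · right
        refine ⟨t + 1, by simpa using Nat.succ_lt_succ ht, d, hd', b.length + a', ?_, ?_⟩
        · simp [Nat.add_assoc, ha']
        · refine hxeq'.trans ?_
          simp only [List.flatten_cons]
          rw [List.drop_append, List.drop_eq_nil_of_le (as := b) (i := b.length + a') (by omega), List.nil_append, Nat.add_sub_cancel_left]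

def SLP.exp {α : Type} (G : SLP α) (s : Fin G.n ⊕ α) : List α :=
  match s with
  | Sum.inl j => G.val j
  | Sum.inr a => [a]

lemma SLP.val_eq {α : Type} (G : SLP α) (i : Fin G.n) :
    G.val i = ((G.rhs i).map G.exp).flatten := by
  rw [SLP.val]
  congr 1
  have h1 : (fun (s : {x // x ∈ G.rhs i}) => match h : s.1 with
      | Sum.inl j => G.val j
      | Sum.inr a => [a]) = fun s => G.exp s.1 := by
    funext s; cases hs : s.1 <;> simp [SLP.exp, hs]
  rw [h1]
  exact List.attach_map_val

def SLP.pref {α : Type} (G : SLP α) (i : Fin G.n) (t : ℕ) : ℕ :=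
  (((G.rhs i).take t).map G.exp).flatten.length

lemma slp_anchor {Γ : Type} (G : SLP Γ) :
    ∀ (m : ℕ) (i : Fin G.n), (i : ℕ) < m → ∀ x : List Γ, x ≠ [] → x <:+: G.val i →
    ∃ j : Fin G.n, ∃ t, t < (G.rhs j).length ∧ ∃ d, d < x.length ∧
      x = ((G.val j).drop (G.pref j t - d)).take x.length := by
  intro m
  induction m with
  | zero => intro i hi; omega
  | succ m IH =>
    intro i hi x hx hinf
    rw [SLP.val_eq] at hinf
    rcases flatten_anchor _ x hx hinf with ⟨t, ht, hinf'⟩ | ⟨t, ht, d, hd, a, ha, hxeq⟩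
    · have ht' : t < (G.rhs i).length := by simpa using ht
      have hget : ((G.rhs i).map G.exp).get ⟨t, ht⟩ = G.exp ((G.rhs i).get ⟨t, ht'⟩) := by
        simp
      rw [hget] at hinf'
      cases hs : (G.rhs i).get ⟨t, ht'⟩ with
      | inl j =>
        rw [hs] at hinf'
        have hmem : Sum.inl j ∈ G.rhs i := hs ▸ List.get_mem _ ⟨t, ht'⟩
        have hj : (j : ℕ) < (i : ℕ) := G.dec i j hmem
        have : x <:+: G.val j := by
          refine hinf'.trans ?_
          exact ((G.val j).tail_suffix).isInfix
        exact IH j (by omega) x hx this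
      | inr a =>
        rw [hs] at hinf'
        simp [SLP.exp] at hinf'
        exact absurd hinf' hx
    · refine ⟨i, t, by simpa using ht, d, hd, ?_⟩
      have hpref : G.pref i t = a + d := by
        rw [SLP.pref, List.map_take]
        omega
      rw [SLP.val_eq, hpref]
      have : a + d - d = a := by omega
      rw [this]
      exact hxeq


lemma countOcc_infix {Γ : Type} [DecidableEq Γ] {x w : List Γ} (h : countOcc x w ≠ 0) :
    x <:+: w := by
  rw [countOcc] at h
  set l := (List.range (w.length + 1)).filter (fun i => decide ((w.drop i).take x.length = x)) with hl
  have hne : l ≠ [] := fun hn => h (by rw [hn]; rfl)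
  obtain ⟨a, ha⟩ := List.exists_mem_of_ne_nil l hne
  have h2 := List.of_mem_filter ha
  simp only [decide_eq_true_eq] at h2
  exact h2 ▸ take_drop_infix w a x.length


/-- If `u` contains pairwise disjoint factors `v 1, …, v k` such that the combined
multiset of their factors of length `ℓ` contains at least `D` distinct words each
occurring exactly once, then `u` has at least `D` distinct factors of length `ℓ`, and any
SLP for `u` has size at least `D / ℓ`. -/
theorem repair_stmt_16 {Γ : Type} [DecidableEq Γ] (u : List Γ) (k ℓ D : ℕ)
    (hℓ : 1 ≤ ℓ) (v : ℕ → List Γ) (pos : ℕ → ℕ)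
    (hocc : ∀ i, 1 ≤ i → i ≤ k → (u.drop (pos i)).take (v i).length = v i)
    (hdisj : ∀ i j, 1 ≤ i → i < j → j ≤ k → pos i + (v i).length ≤ pos j)
    (S : Finset (List Γ)) (hcard : D ≤ S.card)
    (hS : ∀ x ∈ S, x.length = ℓ ∧ (∑ i ∈ Finset.Icc 1 k, countOcc x (v i)) = 1) :
    D ≤ {x : List Γ | x.length = ℓ ∧ x <:+: u}.ncard ∧
    ∀ G : SLP Γ, G.produces u → D ≤ G.size * ℓ := by
  set F : Set (List Γ) := {x : List Γ | x.length = ℓ ∧ x <:+: u} with hF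
  have hsub : ↑S ⊆ F := by
    intro x hx
    obtain ⟨hlen, hsum⟩ := hS x hx
    have hex : ∃ i ∈ Finset.Icc 1 k, countOcc x (v i) ≠ 0 :=
      Finset.exists_ne_zero_of_sum_ne_zero (by rw [hsum]; exact one_ne_zero)
    obtain ⟨i, hi, hne⟩ := hex
    rw [Finset.mem_Icc] at hi
    have h1 : x <:+: v i := countOcc_infix hne
    have h2 : v i <:+: u := (hocc i hi.1 hi.2) ▸ take_drop_infix u (pos i) (v i).length
    exact ⟨hlen, h1.trans h2⟩
  have hFfin : F.Finite := by
    apply (u.sublists.toFinset.finite_toSet).subset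
    intro x hx
    exact List.mem_toFinset.mpr (List.mem_sublists.mpr hx.2.sublist)
  have hDF : D ≤ F.ncard := by
    calc D ≤ S.card := hcard
      _ = (↑S : Set (List Γ)).ncard := (Set.ncard_coe_finset S).symm
      _ ≤ F.ncard := Set.ncard_le_ncard hsub hFfin
  refine ⟨hDF, ?_⟩
  intro G hG
  classical
  set T : Finset ((_ : Fin G.n) × (ℕ × ℕ)) :=
    Finset.univ.sigma (fun j => Finset.range ((G.rhs j).length) ×ˢ Finset.range ℓ) with hT
  set f : ((_ : Fin G.n) × (ℕ × ℕ)) → List Γ :=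
    fun p => ((G.val p.1).drop (G.pref p.1 p.2.1 - p.2.2)).take ℓ with hf
  have himg : F ⊆ f '' ↑T := by
    intro x hx
    obtain ⟨hlen, hinf⟩ := hx
    have hx0 : x ≠ [] := by intro hn; rw [hn] at hlen; simp at hlen; omega
    rw [← hG] at hinf
    obtain ⟨j, t, ht, d, hd, hxeq⟩ := slp_anchor G G.n G.start G.start.isLt x hx0 hinf
    refine ⟨⟨j, (t, d)⟩, ?_, ?_⟩
    · simp [hT, Finset.mem_sigma, Finset.mem_product, Finset.mem_range]
      exact ⟨ht, by omega⟩
    · rw [hf]; dsimp only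
      rw [← hlen]; exact hxeq.symm
  have hcount : F.ncard ≤ T.card := by
    calc F.ncard ≤ (f '' ↑T).ncard := Set.ncard_le_ncard himg ((T.finite_toSet).image f)
      _ ≤ (↑T : Set ((_ : Fin G.n) × (ℕ × ℕ))).ncard := Set.ncard_image_le T.finite_toSet
      _ = T.card := Set.ncard_coe_finset T
  have hTcard : T.card = G.size * ℓ := by
    rw [hT, Finset.card_sigma]
    simp [Finset.card_product]
    rw [SLP.size, ← Finset.sum_mul]
  omega
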